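/- arXiv:2502.11449 — 3 statements merged into one kernel-verified Lean document; each statement's English description precedes it below -/
import Mathlib

section
/- For any balanced economy (n, Z), the set of Walrasian equilibria equals the union over λ ≥ 1 of λ times the set of strong solutions of the VI ([0,1]ⁿ, -Z): WE(n,Z) = ⋃_{λ≥1} λ·SVI([0,1]ⁿ, -Z). -/
open Finset

/-- Balanced economies as VIs on the unit box: the set of Walrasian equilibria equals
`⋃_{λ ≥ 1} λ · SVI([0,1]ⁿ, -Z)`. -/
theorem balanced_WE_eq_cone_of_SVI
    {n : ℕ} (Z : (Fin n → ℝ) → Set (Fin n → ℝ))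
    (hom : ∀ lam : ℝ, 0 < lam → ∀ p : Fin n → ℝ, (∀ i, 0 ≤ p i) →
      Z (lam • p) = Z p)
    (weakWalras : ∀ p : Fin n → ℝ, (∀ i, 0 ≤ p i) → ∀ z ∈ Z p,
      ∑ j, p j * z j ≤ 0) :
    {ps : Fin n → ℝ | (∀ i, 0 ≤ ps i) ∧
        ∃ z ∈ Z ps, (∀ j, z j ≤ 0) ∧ ∑ j, ps j * z j = 0}
      = {q : Fin n → ℝ | ∃ lam : ℝ, 1 ≤ lam ∧ ∃ ps : Fin n → ℝ,
          ((∀ i, ps i ∈ Set.Icc (0 : ℝ) 1) ∧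
            ∃ z ∈ Z ps, ∀ p : Fin n → ℝ, (∀ i, p i ∈ Set.Icc (0 : ℝ) 1) →
              ∑ j, z j * (p j - ps j) ≤ 0) ∧
          q = lam • ps} := by
  ext q
  simp only [Set.mem_setOf_eq]
  constructor
  · rintro ⟨hq, z, hz, hzneg, hsum⟩
    set lam : ℝ := 1 + ∑ j, q j with hlamdef
    have hsumq : (0:ℝ) ≤ ∑ j, q j := Finset.sum_nonneg fun j _ => hq j
    have hlam1 : (1:ℝ) ≤ lam := by simp [hlamdef]; linarith
    have hlampos : (0:ℝ) < lam := lt_of_lt_of_le one_pos hlam1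
    refine ⟨lam, hlam1, lam⁻¹ • q, ⟨?_, ?_⟩, ?_⟩
    · intro i
      constructor
      · exact mul_nonneg (inv_nonneg.2 hlampos.le) (hq i)
      · have hle : q i ≤ ∑ j, q j :=
          Finset.single_le_sum (fun j _ => hq j) (Finset.mem_univ i)
        have : q i ≤ lam := by simp [hlamdef]; linarith
        calc (lam⁻¹ • q) i = q i / lam := by
              simp [Pi.smul_apply, smul_eq_mul, div_eq_inv_mul]
          _ ≤ 1 := (div_le_one hlampos).2 this
    · have hZ : Z (lam⁻¹ • q) = Z q := hom lam⁻¹ (inv_pos.2 hlampos) q hq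
      refine ⟨z, hZ ▸ hz, ?_⟩
      intro p hp
      have h1 : ∑ j, z j * (lam⁻¹ • q) j = 0 := by
        have : ∑ j, z j * (lam⁻¹ • q) j = lam⁻¹ * ∑ j, q j * z j := by
          rw [Finset.mul_sum]
          exact Finset.sum_congr rfl fun j _ => by
            simp [Pi.smul_apply, smul_eq_mul]; ring
        rw [this, hsum, mul_zero]
      have h2 : ∑ j, z j * p j ≤ 0 :=
        Finset.sum_nonpos fun j _ => mul_nonpos_of_nonpos_of_nonneg (hzneg j) (hp j).1
      calc ∑ j, z j * (p j - (lam⁻¹ • q) j)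
          = ∑ j, z j * p j - ∑ j, z j * (lam⁻¹ • q) j := by
            rw [← Finset.sum_sub_distrib]
            exact Finset.sum_congr rfl fun j _ => by ring
        _ ≤ 0 := by rw [h1]; linarith
    · have : lam • lam⁻¹ • q = q := by
        rw [smul_smul, mul_inv_cancel₀ hlampos.ne', one_smul]
      rw [this]
  · rintro ⟨lam, hlam1, ps, ⟨hpsbox, z, hz, hVI⟩, rfl⟩
    have hlampos : (0:ℝ) < lam := lt_of_lt_of_le one_pos hlam1
    have hpsnn : ∀ i, 0 ≤ ps i := fun i => (hpsbox i).1
    have hZ : Z (lam • ps) = Z ps := hom lam hlampos ps hpsnn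
    -- weak Walras at ps
    have hww : ∑ j, ps j * z j ≤ 0 := weakWalras ps hpsnn z hz
    -- VI at p = 0 gives the reverse inequality
    have h0 : ∑ j, z j * ((0 : Fin n → ℝ) j - ps j) ≤ 0 :=
      hVI 0 (fun i => by simp)
    have hge : 0 ≤ ∑ j, ps j * z j := by
      have : ∑ j, z j * ((0 : Fin n → ℝ) j - ps j) = -∑ j, ps j * z j := by
        rw [← Finset.sum_neg_distrib]
        exact Finset.sum_congr rfl fun j _ => by simp; ring
      linarith [this ▸ h0]
    have hps0 : ∑ j, ps j * z j = 0 := le_antisymm hww hge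
    refine ⟨fun i => mul_nonneg hlampos.le (hpsnn i), z, hZ ▸ hz, ?_, ?_⟩
    · intro i
      have hVIi := hVI (Pi.single i 1) (fun j => by
        rcases eq_or_ne j i with rfl | hne
        · simp
        · simp [Pi.single_eq_of_ne hne])
      have e2 : ∑ j, z j * (Pi.single i 1 : Fin n → ℝ) j = z i := by
        rw [Finset.sum_eq_single i]
        · simp
        · intro j _ hne; simp [Pi.single_eq_of_ne hne]
        · intro h; exact absurd (Finset.mem_univ i) h
      have this : ∑ j, z j * ((Pi.single i 1 : Fin n → ℝ) j - ps j)
          = z i - ∑ j, ps j * z j := by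
        rw [← e2, ← Finset.sum_sub_distrib]
        exact Finset.sum_congr rfl fun j _ => by ring
      rw [this, hps0, sub_zero] at hVIi
      exact hVIi
    · have : ∑ j, (lam • ps) j * z j = lam * ∑ j, ps j * z j := by
        rw [Finset.mul_sum]
        exact Finset.sum_congr rfl fun j _ => by
          simp [Pi.smul_apply, smul_eq_mul]; ring
      rw [this, hps0, mul_zero]
end

section
/- In a balanced economy (n, Z), every ε-strong solution p* of the VI ([0,1]ⁿ, -Z) is an ε-Walrasian equilibrium: there exists z ∈ Z(p*) such that zⱼ ≤ ε for all commodities j, and -ε ≤ p*·z ≤ ε. -/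
open Finset

/-- In a balanced economy, every ε-strong solution of the VI `([0,1]ⁿ, -Z)` is an
ε-Walrasian equilibrium. -/
theorem eps_strong_solution_is_eps_walrasian
    {n : ℕ} (Z : (Fin n → ℝ) → Set (Fin n → ℝ))
    (hom : ∀ lam : ℝ, 0 < lam → ∀ p : Fin n → ℝ, (∀ i, 0 ≤ p i) →
      Z (lam • p) = Z p)
    (weakWalras : ∀ p : Fin n → ℝ, (∀ i, 0 ≤ p i) → ∀ z ∈ Z p,
      ∑ j, p j * z j ≤ 0)
    (ε : ℝ) (hε : 0 ≤ ε)
    (ps : Fin n → ℝ) (hps : ∀ i, ps i ∈ Set.Icc (0 : ℝ) 1)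
    (z : Fin n → ℝ) (hz : z ∈ Z ps)
    (hstrong : ∀ p : Fin n → ℝ, (∀ i, p i ∈ Set.Icc (0 : ℝ) 1) →
      ∑ j, z j * (p j - ps j) ≤ ε) :
    (∀ j, z j ≤ ε) ∧ (-ε ≤ ∑ j, ps j * z j ∧ ∑ j, ps j * z j ≤ ε) := by
  have hW : ∑ j, ps j * z j ≤ 0 :=
    weakWalras ps (fun i => (hps i).1) z hz
  have hlow : -ε ≤ ∑ j, ps j * z j := by
    have h0 := hstrong (fun _ => 0) (fun i => ⟨le_refl _, zero_le_one⟩)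
    have : ∑ j, z j * (0 - ps j) = -∑ j, ps j * z j := by
      rw [← Finset.sum_neg_distrib]
      exact Finset.sum_congr rfl (fun j _ => by ring)
    rw [this] at h0
    linarith
  refine ⟨fun j => ?_, hlow, le_trans hW hε⟩
  have hj := hstrong (fun k => if k = j then 1 else 0) (fun i => by
    by_cases h : i = j <;> simp [h])
  have heq : ∑ k, z k * ((if k = j then (1:ℝ) else 0) - ps k)
      = z j - ∑ k, ps k * z k := by
    have : ∀ k, z k * ((if k = j then (1:ℝ) else 0) - ps k)
        = (if k = j then z k else 0) - ps k * z k := by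
      intro k; by_cases h : k = j <;> simp [h] <;> ring
    simp only [this, Finset.sum_sub_distrib, Finset.sum_ite_eq' Finset.univ j z,
      Finset.mem_univ, if_true]
  rw [heq] at hj
  linarith
end

section
/- In an ℓ-elastic economy with excess demand z(p) = d(p) - s(p), for any 1-strongly-convex differentiable kernel h: ℝ₊ⁿ → ℝ, and for all p, q ∈ ℝ₊₊ⁿ: (1/2)‖z(q) - z(p)‖² ≤ (ℓ(‖d(p)‖ + ‖s(p)‖)/‖p‖_∞)² · D_h(q, p). -/
open scoped RealInnerProductSpace



lemma coord_abs_le_norm {n : ℕ} (x : EuclideanSpace ℝ (Fin n)) (i : Fin n) :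
    |x i| ≤ ‖x‖ := by
  rw [EuclideanSpace.norm_eq, ← Real.sqrt_sq (abs_nonneg (x i))]
  apply Real.sqrt_le_sqrt
  rw [sq_abs]
  simp only [Real.norm_eq_abs, sq_abs]
  exact Finset.single_le_sum (f := fun j => x j ^ 2) (fun j _ => sq_nonneg _) (Finset.mem_univ i)

lemma elastic_zero_prop {n : ℕ} (f : EuclideanSpace ℝ (Fin n) → EuclideanSpace ℝ (Fin n))
    (hf : ∀ p : EuclideanSpace ℝ (Fin n), (∀ i, 0 ≤ p i) → ∀ j, 0 ≤ f p j)
    (ℓ : ℝ) (hℓ : 0 ≤ ℓ)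
    (hel : ∀ p q : EuclideanSpace ℝ (Fin n), (∀ i, 0 ≤ p i) → (∀ i, 0 ≤ q i) → ∀ j k : Fin n,
      |(f q j - f p j) / f p j * (p k / (q k - p k))| ≤ ℓ)
    (j : Fin n) :
    ∀ p q : EuclideanSpace ℝ (Fin n), (∀ i, 0 < p i) → (∀ i, 0 < q i) →
      f p j = 0 → f q j = 0 := by
  intro p q hp hq hfp
  by_contra hq0
  set S : Set (EuclideanSpace ℝ (Fin n)) := {x | ∀ i, 0 < x i} with hS
  have hne : Finset.univ.Nonempty (α := Fin n) := ⟨j, Finset.mem_univ j⟩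
  -- min coordinate
  set m : EuclideanSpace ℝ (Fin n) → ℝ := fun x => Finset.univ.inf' hne (fun i => x i) with hm
  have hm_le : ∀ x : EuclideanSpace ℝ (Fin n), ∀ i, m x ≤ x i := fun x i =>
    Finset.inf'_le _ (Finset.mem_univ i)
  have hm_pos : ∀ x ∈ S, 0 < m x := by
    intro x hx
    obtain ⟨i0, -, hi0⟩ := Finset.exists_mem_eq_inf' hne (fun i => x i)
    rw [hm]; dsimp only; rw [hi0]; exact hx i0
  set δ : EuclideanSpace ℝ (Fin n) → ℝ := fun x => m x / (2 * (ℓ + 1)) with hδ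
  have hδ_pos : ∀ x ∈ S, 0 < δ x := fun x hx =>
    div_pos (hm_pos x hx) (by linarith)
  have hδm : ∀ x : EuclideanSpace ℝ (Fin n), (ℓ + 1) * δ x = m x / 2 := by
    intro x; rw [hδ]; dsimp only; field_simp
  have hSnonneg : ∀ x ∈ S, ∀ i, (0:ℝ) ≤ x i := fun x hx i => (hx i).le
  -- coordinate distance bound
  have hcoord : ∀ x y : EuclideanSpace ℝ (Fin n), ∀ k, |x k - y k| ≤ dist x y := by
    intro x y k
    have := coord_abs_le_norm (x - y) k
    simpa [dist_eq_norm] using this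
  -- Key 1 : balls around zero points contain only zero points of S
  have key1 : ∀ x ∈ S, f x j = 0 → ∀ y ∈ S, dist y x < δ x → f y j = 0 := by
    intro x hx hx0 y hy hyx
    by_contra hy0
    have hypos : 0 < f y j := lt_of_le_of_ne (hf y (hSnonneg y hy) j) (Ne.symm hy0)
    have hyne : y ≠ x := by rintro rfl; exact hy0 hx0
    have : ∃ k, y k ≠ x k := by
      by_contra hc
      push_neg at hc
      exact hyne (PiLp.ext hc)
    obtain ⟨k, hk⟩ := this
    have h1 := hel y x (hSnonneg y hy) (hSnonneg x hx) j k
    rw [hx0] at h1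
    have h2 : (0 - f y j) / f y j = -1 := by
      rw [zero_sub, neg_div, div_self hypos.ne']
    rw [h2] at h1
    have h3 : |y k / (x k - y k)| ≤ ℓ := by
      calc |y k / (x k - y k)| = |(-1 : ℝ) * (y k / (x k - y k))| := by rw [abs_mul]; simp
      _ ≤ ℓ := h1
    have hxk : x k - y k ≠ 0 := sub_ne_zero.mpr (Ne.symm hk)
    have h4 : y k ≤ ℓ * |x k - y k| := by
      rw [abs_div, abs_of_pos (hy k)] at h3
      have habs : 0 < |x k - y k| := abs_pos.mpr hxk
      rw [div_le_iff₀ habs] at h3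
      linarith [h3]
    have h5 : |x k - y k| ≤ δ x := by
      have := hcoord x y k
      rw [dist_comm] at hyx
      linarith
    have h6 : y k ≤ ℓ * δ x := le_trans h4 (by nlinarith)
    have h7 : x k - δ x < y k := by
      have h8 := hcoord y x k
      have : |y k - x k| < δ x := lt_of_le_of_lt h8 hyx
      have := abs_lt.mp this
      linarith [this.1]
    have hmx := hm_pos x hx
    have hmle := hm_le x k
    have := hδm x
    have hδpos := hδ_pos x hx
    nlinarith
  -- Key 2 : balls around nonzero points contain only nonzero points of S
  have key2 : ∀ x ∈ S, f x j ≠ 0 → ∀ y ∈ S, dist y x < δ x → f y j ≠ 0 := by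
    intro x hx hx0 y hy hyx hy0
    have hxpos : 0 < f x j := lt_of_le_of_ne (hf x (hSnonneg x hx) j) (Ne.symm hx0)
    have hyne : y ≠ x := by rintro rfl; exact hx0 hy0
    have : ∃ k, y k ≠ x k := by
      by_contra hc
      push_neg at hc
      exact hyne (PiLp.ext hc)
    obtain ⟨k, hk⟩ := this
    have h1 := hel x y (hSnonneg x hx) (hSnonneg y hy) j k
    rw [hy0] at h1
    have h2 : (0 - f x j) / f x j = -1 := by
      rw [zero_sub, neg_div, div_self hxpos.ne']
    rw [h2] at h1
    have h3 : |x k / (y k - x k)| ≤ ℓ := by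
      calc |x k / (y k - x k)| = |(-1 : ℝ) * (x k / (y k - x k))| := by rw [abs_mul]; simp
      _ ≤ ℓ := h1
    have hxk : y k - x k ≠ 0 := sub_ne_zero.mpr hk
    have h4 : x k ≤ ℓ * |y k - x k| := by
      rw [abs_div, abs_of_pos (hx k)] at h3
      have habs : 0 < |y k - x k| := abs_pos.mpr hxk
      rw [div_le_iff₀ habs] at h3
      linarith [h3]
    have h5 : |y k - x k| ≤ δ x := (le_of_lt (lt_of_le_of_lt (hcoord y x k) hyx))
    have hmx := hm_pos x hx
    have hmle := hm_le x k
    have := hδm x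
    have hδpos := hδ_pos x hx
    nlinarith
  -- connectedness argument
  have hSconv : Convex ℝ S := by
    intro x hx y hy a b ha hb hab
    intro i
    have hxi := hx i
    have hyi := hy i
    have : (a • x + b • y) i = a * x i + b * y i := by
      simp [PiLp.add_apply, PiLp.smul_apply, smul_eq_mul]
    rw [this]
    rcases eq_or_lt_of_le ha with h | h
    · have hb1 : b = 1 := by linarith
      rw [← h, hb1]; simpa using hyi
    · have : 0 < a * x i := mul_pos h hxi
      have : 0 ≤ b * y i := mul_nonneg hb hyi.le
      nlinarith
  have hSconn : IsPreconnected S := hSconv.isPreconnected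
  set U : Set (EuclideanSpace ℝ (Fin n)) :=
    ⋃ x ∈ {x | x ∈ S ∧ f x j = 0}, Metric.ball x (δ x) with hU
  set V : Set (EuclideanSpace ℝ (Fin n)) :=
    ⋃ x ∈ {x | x ∈ S ∧ f x j ≠ 0}, Metric.ball x (δ x) with hV
  have hUopen : IsOpen U := isOpen_biUnion fun _ _ => Metric.isOpen_ball
  have hVopen : IsOpen V := isOpen_biUnion fun _ _ => Metric.isOpen_ball
  have hcover : S ⊆ U ∪ V := by
    intro x hx
    by_cases hx0 : f x j = 0
    · left
      exact Set.mem_biUnion ⟨hx, hx0⟩ (Metric.mem_ball_self (hδ_pos x hx))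
    · right
      exact Set.mem_biUnion ⟨hx, hx0⟩ (Metric.mem_ball_self (hδ_pos x hx))
  have hpU : (S ∩ U).Nonempty :=
    ⟨p, hp, Set.mem_biUnion ⟨hp, hfp⟩ (Metric.mem_ball_self (hδ_pos p hp))⟩
  have hqV : (S ∩ V).Nonempty :=
    ⟨q, hq, Set.mem_biUnion ⟨hq, hq0⟩ (Metric.mem_ball_self (hδ_pos q hq))⟩
  obtain ⟨y, hyS, hyU, hyV⟩ := hSconn U V hUopen hVopen hcover hpU hqV
  obtain ⟨x1, hx1, hball1⟩ := Set.mem_iUnion₂.mp hyU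
  obtain ⟨x2, hx2, hball2⟩ := Set.mem_iUnion₂.mp hyV
  have hzero := key1 x1 hx1.1 hx1.2 y hyS (Metric.mem_ball.mp hball1)
  have hnonzero := key2 x2 hx2.1 hx2.2 y hyS (Metric.mem_ball.mp hball2)
  exact hnonzero hzero



-- direct step: when denominators are nonzero
lemma elastic_step {n : ℕ} {f : EuclideanSpace ℝ (Fin n) → EuclideanSpace ℝ (Fin n)}
    {ℓ : ℝ}
    (hel : ∀ p q : EuclideanSpace ℝ (Fin n), (∀ i, 0 ≤ p i) → (∀ i, 0 ≤ q i) → ∀ j k : Fin n,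
      |(f q j - f p j) / f p j * (p k / (q k - p k))| ≤ ℓ)
    (p q : EuclideanSpace ℝ (Fin n)) (hp : ∀ i, 0 < p i) (hq : ∀ i, 0 < q i)
    (j k : Fin n) (hfp : 0 < f p j) (hk : q k ≠ p k) :
    |f q j - f p j| ≤ ℓ * f p j * |q k - p k| / p k := by
  have h1 := hel p q (fun i => (hp i).le) (fun i => (hq i).le) j k
  have hpk : 0 < p k := hp k
  have hd : 0 < |q k - p k| := abs_pos.mpr (sub_ne_zero.mpr hk)
  rw [abs_mul, abs_div, abs_div, abs_of_pos hfp, abs_of_pos hpk] at h1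
  rw [div_mul_div_comm] at h1
  rw [div_le_iff₀ (by positivity)] at h1
  rw [le_div_iff₀ hpk]
  nlinarith



lemma elastic_comp {n : ℕ} (f : EuclideanSpace ℝ (Fin n) → EuclideanSpace ℝ (Fin n))
    (hf : ∀ p : EuclideanSpace ℝ (Fin n), (∀ i, 0 ≤ p i) → ∀ j, 0 ≤ f p j)
    (ℓ : ℝ) (hℓ : 0 ≤ ℓ)
    (hel : ∀ p q : EuclideanSpace ℝ (Fin n), (∀ i, 0 ≤ p i) → (∀ i, 0 ≤ q i) → ∀ j k : Fin n,
      |(f q j - f p j) / f p j * (p k / (q k - p k))| ≤ ℓ)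
    (p q : EuclideanSpace ℝ (Fin n)) (hp : ∀ i, 0 < p i) (hq : ∀ i, 0 < q i)
    (j k : Fin n) :
    |f q j - f p j| ≤ ℓ * f p j * |q k - p k| / p k := by
  rcases eq_or_lt_of_le (hf p (fun i => (hp i).le) j) with hfp0 | hfp
  · -- f p j = 0 : then f q j = 0
    have hfq0 := elastic_zero_prop f hf ℓ hℓ hel j p q hp hq hfp0.symm
    rw [hfq0, ← hfp0]
    simp
  · by_cases hk : q k = p k
    · -- limiting argument
      have hbound : ∀ ε : ℝ, 0 < ε →
          |f q j - f p j| ≤ 2 * ℓ * f p j / p k * ε + ℓ ^ 2 * f p j / p k ^ 2 * ε ^ 2 := by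
        intro ε hε
        set r : EuclideanSpace ℝ (Fin n) := q + EuclideanSpace.single k ε with hr
        have hri : ∀ i, r i = q i + if i = k then ε else 0 := by
          intro i
          simp [hr, EuclideanSpace.single_apply]
        have hrpos : ∀ i, 0 < r i := by
          intro i
          rw [hri i]
          by_cases hik : i = k
          · simp [hik]; linarith [hq k]
          · simp [hik]; exact hq i
        have hrk : r k = p k + ε := by rw [hri k]; simp [hk]
        have hrk_ne : r k ≠ p k := by rw [hrk]; intro hcc; linarith
        have h1 := elastic_step hel p r hp hrpos j k hfp hrk_ne
        have hrkp : |r k - p k| = ε := by rw [hrk]; simp [abs_of_pos hε]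
        rw [hrkp] at h1
        -- f r j > 0
        have hfr : 0 < f r j := by
          rcases eq_or_lt_of_le (hf r (fun i => (hrpos i).le) j) with h0 | h
          · exfalso
            have := elastic_zero_prop f hf ℓ hℓ hel j r p hrpos hp h0.symm
            rw [this] at hfp; exact lt_irrefl _ hfp
          · exact h
        have hqk_ne : q k ≠ r k := by rw [hrk, hk]; intro hcc; linarith
        have h2 := elastic_step hel r q hrpos hq j k hfr hqk_ne
        have hqkr : |q k - r k| = ε := by rw [hrk, hk]; rw [abs_sub_comm]; simp [abs_of_pos hε]
        rw [hqkr] at h2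
        have hpk := hp k
        -- bound f r j
        have hfr_le : f r j ≤ f p j + ℓ * f p j * ε / p k := by
          have := abs_le.mp h1
          linarith [this.1, this.2]
        -- ε / r k ≤ ε / p k
        have hdivle : ℓ * f r j * ε / r k ≤ ℓ * f r j * ε / p k := by
          apply div_le_div_of_nonneg_left _ hpk _
          · positivity
          · rw [hrk]; linarith
        have h3 : |f q j - f p j| ≤ |f q j - f r j| + |f r j - f p j| := by
          calc |f q j - f p j| = |(f q j - f r j) + (f r j - f p j)| := by ring_nf
          _ ≤ _ := abs_add_le _ _
        have h4 : |f q j - f r j| ≤ ℓ * f r j * ε / p k := le_trans h2 hdivle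
        have h7 : |f q j - f r j| ≤ ℓ * f p j * ε / p k + ℓ ^ 2 * f p j / p k ^ 2 * ε ^ 2 := by
          calc |f q j - f r j| ≤ ℓ * f r j * ε / p k := h4
          _ ≤ ℓ * (f p j + ℓ * f p j * ε / p k) * ε / p k := by
              gcongr
          _ = ℓ * f p j * ε / p k + ℓ ^ 2 * f p j / p k ^ 2 * ε ^ 2 := by
              field_simp
        have hgoal : 2 * ℓ * f p j / p k * ε + ℓ ^ 2 * f p j / p k ^ 2 * ε ^ 2
            = ℓ * f p j * ε / p k + (ℓ * f p j * ε / p k + ℓ ^ 2 * f p j / p k ^ 2 * ε ^ 2) := by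
          ring
        rw [hgoal]
        linarith [h3, h1, h7]
      -- conclude via limit
      have hA : Filter.Tendsto
          (fun ε : ℝ => 2 * ℓ * f p j / p k * ε + ℓ ^ 2 * f p j / p k ^ 2 * ε ^ 2)
          (nhdsWithin 0 (Set.Ioi 0)) (nhds 0) := by
        have hc : Continuous (fun ε : ℝ => 2 * ℓ * f p j / p k * ε + ℓ ^ 2 * f p j / p k ^ 2 * ε ^ 2) := by
          continuity
        have := hc.tendsto 0
        simp only [mul_zero, zero_pow, add_zero, ne_eq, OfNat.ofNat_ne_zero,
          not_false_eq_true, zero_add] at this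
        exact this.mono_left nhdsWithin_le_nhds
      have hle0 : |f q j - f p j| ≤ 0 := by
        refine ge_of_tendsto hA ?_
        filter_upwards [self_mem_nhdsWithin] with ε hε
        exact hbound ε hε
      have : |q k - p k| = 0 := by rw [hk]; simp
      rw [this]
      simpa using hle0
    · exact elastic_step hel p q hp hq j k hfp hk



lemma elastic_norm_bound {n : ℕ} (hn : 0 < n)
    (f : EuclideanSpace ℝ (Fin n) → EuclideanSpace ℝ (Fin n))
    (hf : ∀ p : EuclideanSpace ℝ (Fin n), (∀ i, 0 ≤ p i) → ∀ j, 0 ≤ f p j)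
    (ℓ : ℝ) (hℓ : 0 ≤ ℓ)
    (hel : ∀ p q : EuclideanSpace ℝ (Fin n), (∀ i, 0 ≤ p i) → (∀ i, 0 ≤ q i) → ∀ j k : Fin n,
      |(f q j - f p j) / f p j * (p k / (q k - p k))| ≤ ℓ)
    (p q : EuclideanSpace ℝ (Fin n)) (hp : ∀ i, 0 < p i) (hq : ∀ i, 0 < q i) :
    ‖f q - f p‖ ≤ ℓ * ‖q - p‖ / (⨆ k : Fin n, p k) * ‖f p‖ := by
  haveI : Nonempty (Fin n) := Fin.pos_iff_nonempty.mp hn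
  obtain ⟨k0, hk0⟩ := Finite.exists_max (fun k : Fin n => p k)
  have hM : (⨆ k : Fin n, p k) = p k0 :=
    le_antisymm (ciSup_le hk0) (le_ciSup (Set.Finite.bddAbove (Set.finite_range _)) k0)
  have hMpos : 0 < p k0 := hp k0
  set C : ℝ := ℓ * ‖q - p‖ / (⨆ k : Fin n, p k) with hC
  have hCnonneg : 0 ≤ C := by
    rw [hC, hM]; positivity
  have hcomp : ∀ j, |f q j - f p j| ≤ C * f p j := by
    intro j
    have h1 := elastic_comp f hf ℓ hℓ hel p q hp hq j k0
    have h2 : |q k0 - p k0| ≤ ‖q - p‖ := by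
      have := coord_abs_le_norm (q - p) k0
      simpa using this
    calc |f q j - f p j| ≤ ℓ * f p j * |q k0 - p k0| / p k0 := h1
    _ ≤ ℓ * f p j * ‖q - p‖ / p k0 := by
        have h6 : 0 ≤ f p j := hf p (fun i => (hp i).le) j
        gcongr <;> first | exact mul_nonneg hℓ h6 | exact h2
    _ = C * f p j := by rw [hC, hM]; field_simp
  -- sum up
  rw [EuclideanSpace.norm_eq, EuclideanSpace.norm_eq]
  have hsum : ∑ i, ‖(f q - f p) i‖ ^ 2 ≤ C ^ 2 * ∑ i, ‖f p i‖ ^ 2 := by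
    rw [Finset.mul_sum]
    apply Finset.sum_le_sum
    intro i _
    have h1 : ‖(f q - f p) i‖ = |f q i - f p i| := by
      simp [Real.norm_eq_abs]
    have h2 : ‖f p i‖ = |f p i| := Real.norm_eq_abs _
    rw [h1, h2]
    have h3 := hcomp i
    have h4 : (0:ℝ) ≤ |f q i - f p i| := abs_nonneg _
    have h5 : |f p i| = f p i := abs_of_nonneg (hf p (fun i => (hp i).le) i)
    rw [h5]
    nlinarith [h3, h4]
  calc Real.sqrt (∑ i, ‖(f q - f p) i‖ ^ 2) ≤ Real.sqrt (C ^ 2 * ∑ i, ‖f p i‖ ^ 2) :=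
      Real.sqrt_le_sqrt hsum
  _ = C * Real.sqrt (∑ i, ‖f p i‖ ^ 2) := by
      rw [Real.sqrt_mul (sq_nonneg C), Real.sqrt_sq hCnonneg]

lemma strong_convex_bregman {n : ℕ}
    (h : EuclideanSpace ℝ (Fin n) → ℝ) (h' : EuclideanSpace ℝ (Fin n) → EuclideanSpace ℝ (Fin n))
    (hdiff : ∀ x, HasGradientAt h (h' x) x)
    (hconv : ConvexOn ℝ Set.univ (fun u => h u - 1 / 2 * ‖u‖ ^ 2))
    (p q : EuclideanSpace ℝ (Fin n)) :
    1 / 2 * ‖q - p‖ ^ 2 ≤ h q - h p - ⟪h' p, q - p⟫ := by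
  set c : ℝ → EuclideanSpace ℝ (Fin n) := fun t => p + t • (q - p) with hc
  have hc0 : c 0 = p := by simp [hc]
  have hc1 : c 1 = q := by simp [hc]
  have hcderiv : HasDerivAt c (q - p) 0 := by
    simpa [hc] using ((hasDerivAt_id (0:ℝ)).smul_const (q - p)).const_add p
  -- derivative of h ∘ c
  have hhc : HasDerivAt (fun t => h (c t)) (⟪h' p, q - p⟫) 0 := by
    have hfd : HasFDerivAt h (InnerProductSpace.toDual ℝ _ (h' p)) p :=
      hasGradientAt_iff_hasFDerivAt.mp (hdiff p)
    rw [← hc0] at hfd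
    have h2 := hfd.comp_hasDerivAt 0 hcderiv
    rw [hc0] at h2
    have h3 : (InnerProductSpace.toDual ℝ (EuclideanSpace ℝ (Fin n)) (h' p)) (q - p)
        = ⟪h' p, q - p⟫ := InnerProductSpace.toDual_apply_apply
    rw [h3] at h2
    exact h2
  -- derivative of the norm-squared part
  have hnc : HasDerivAt (fun t => 1 / 2 * ‖c t‖ ^ 2) (⟪p, q - p⟫) 0 := by
    have hinner : HasDerivAt (fun t => ⟪c t, c t⟫) (⟪c 0, q - p⟫ + ⟪q - p, c 0⟫) 0 :=
      hcderiv.inner ℝ hcderiv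
    have h3 : HasDerivAt (fun t => 1 / 2 * ⟪c t, c t⟫)
        (1 / 2 * (⟪c 0, q - p⟫ + ⟪q - p, c 0⟫)) 0 := hinner.const_mul (1/2 : ℝ)
    have h4 : (fun t => 1 / 2 * ⟪c t, c t⟫) = fun t => 1 / 2 * ‖c t‖ ^ 2 := by
      funext t
      rw [real_inner_self_eq_norm_sq]
    rw [h4] at h3
    have h5 : 1 / 2 * (⟪c 0, q - p⟫ + ⟪q - p, c 0⟫) = ⟪p, q - p⟫ := by
      rw [hc0, real_inner_comm (q - p) p]
      ring
    rwa [h5] at h3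
  -- the composed function and its convexity
  set φ : ℝ → ℝ := fun t => h (c t) - 1 / 2 * ‖c t‖ ^ 2 with hφ
  have hφderiv : HasDerivAt φ (⟪h' p, q - p⟫ - ⟪p, q - p⟫) 0 := hhc.sub hnc
  have hφconv : ConvexOn ℝ Set.univ φ := by
    have haff : ∀ t : ℝ, c t = AffineMap.lineMap p q t := by
      intro t
      rw [AffineMap.lineMap_apply_module]
      rw [hc]
      simp
      module
    have := hconv.comp_affineMap (AffineMap.lineMap p q)
    have heq : (fun u => h u - 1 / 2 * ‖u‖ ^ 2) ∘ (AffineMap.lineMap p q) = φ := by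
      funext t
      simp only [Function.comp_apply, hφ, haff t]
    rw [heq] at this
    simpa using this
  have hslope := hφconv.le_slope_of_hasDerivAt (Set.mem_univ (0:ℝ)) (Set.mem_univ (1:ℝ))
    zero_lt_one hφderiv
  have hsl : slope φ 0 1 = φ 1 - φ 0 := by
    rw [slope_def_field]
    simp
  rw [hsl] at hslope
  have hφ1 : φ 1 = h q - 1 / 2 * ‖q‖ ^ 2 := by rw [hφ]; simp only; rw [hc1]
  have hφ0 : φ 0 = h p - 1 / 2 * ‖p‖ ^ 2 := by rw [hφ]; simp only; rw [hc0]
  rw [hφ1, hφ0] at hslope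
  -- identity : 1/2‖q‖² - 1/2‖p‖² - ⟪p, q-p⟫ = 1/2‖q-p‖²
  have hid : 1/2*‖q‖^2 - 1/2*‖p‖^2 - ⟪p, q - p⟫ = 1/2*‖q-p‖^2 := by
    have h1 := norm_sub_sq_real q p
    have h2 : ⟪p, q - p⟫ = ⟪p,q⟫ - ⟪p,p⟫ := inner_sub_right _ _ _
    have h3 : ⟪p,p⟫ = ‖p‖^2 := real_inner_self_eq_norm_sq p
    have h4 : ⟪p,q⟫ = ⟪q,p⟫ := real_inner_comm q p
    nlinarith [h1, h2, h3, h4]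
  linarith [hslope, hid]


/-- Bregman-continuity bound for ℓ-elastic economies: for an economy with aggregate
demand `d`, aggregate supply `s`, excess demand `z = d - s`, elasticities bounded by `ℓ`,
and a 1-strongly-convex differentiable kernel `h`, one has
`(1/2)‖z(q) - z(p)‖² ≤ (ℓ(‖d(p)‖ + ‖s(p)‖)/‖p‖_∞)² · D_h(q,p)`. -/
theorem bregman_continuity_of_elastic_economy
    {n : ℕ} (hn : 0 < n)
    (d s : EuclideanSpace ℝ (Fin n) → EuclideanSpace ℝ (Fin n))
    (hd_pos : ∀ p : EuclideanSpace ℝ (Fin n), (∀ i, 0 ≤ p i) → ∀ j, 0 ≤ d p j)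
    (hs_pos : ∀ p : EuclideanSpace ℝ (Fin n), (∀ i, 0 ≤ p i) → ∀ j, 0 ≤ s p j)
    (ℓ : ℝ) (hℓ : 0 ≤ ℓ)
    (helastic_d : ∀ p q : EuclideanSpace ℝ (Fin n),
      (∀ i, 0 ≤ p i) → (∀ i, 0 ≤ q i) → ∀ j k : Fin n,
        |(d q j - d p j) / d p j * (p k / (q k - p k))| ≤ ℓ)
    (helastic_s : ∀ p q : EuclideanSpace ℝ (Fin n),
      (∀ i, 0 ≤ p i) → (∀ i, 0 ≤ q i) → ∀ j k : Fin n,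
        |(s q j - s p j) / s p j * (p k / (q k - p k))| ≤ ℓ)
    (h : EuclideanSpace ℝ (Fin n) → ℝ) (h' : EuclideanSpace ℝ (Fin n) → EuclideanSpace ℝ (Fin n))
    (hdiff : ∀ x, HasGradientAt h (h' x) x)
    (hconv : ConvexOn ℝ Set.univ (fun u => h u - 1 / 2 * ‖u‖ ^ 2))
    (D : EuclideanSpace ℝ (Fin n) → EuclideanSpace ℝ (Fin n) → ℝ)
    (hD : ∀ u v, D u v = h u - h v - ⟪h' v, u - v⟫) :
    ∀ p q : EuclideanSpace ℝ (Fin n), (∀ i, 0 < p i) → (∀ i, 0 < q i) →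
      1 / 2 * ‖(d q - s q) - (d p - s p)‖ ^ 2
        ≤ (ℓ * (‖d p‖ + ‖s p‖) / (⨆ k : Fin n, p k)) ^ 2 * D q p := by
  intro p q hp hq
  have hDge : 1 / 2 * ‖q - p‖ ^ 2 ≤ D q p := by
    rw [hD q p]
    exact strong_convex_bregman h h' hdiff hconv p q
  have hdb := elastic_norm_bound hn d hd_pos ℓ hℓ helastic_d p q hp hq
  have hsb := elastic_norm_bound hn s hs_pos ℓ hℓ helastic_s p q hp hq
  set M : ℝ := ⨆ k : Fin n, p k with hM
  have hMpos : 0 < M := by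
    haveI : Nonempty (Fin n) := Fin.pos_iff_nonempty.mp hn
    obtain ⟨k0⟩ := (inferInstance : Nonempty (Fin n))
    calc (0:ℝ) < p k0 := hp k0
    _ ≤ M := le_ciSup (Set.Finite.bddAbove (Set.finite_range _)) k0
  have htri : ‖(d q - s q) - (d p - s p)‖ ≤ ‖d q - d p‖ + ‖s q - s p‖ := by
    have heq : (d q - s q) - (d p - s p) = (d q - d p) - (s q - s p) := by abel
    rw [heq]
    exact norm_sub_le _ _
  set a : ℝ := ‖d p‖ + ‖s p‖ with ha
  have hR : ‖(d q - s q) - (d p - s p)‖ ≤ ℓ * ‖q - p‖ / M * a := by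
    calc ‖(d q - s q) - (d p - s p)‖ ≤ ‖d q - d p‖ + ‖s q - s p‖ := htri
    _ ≤ ℓ * ‖q - p‖ / M * ‖d p‖ + ℓ * ‖q - p‖ / M * ‖s p‖ := add_le_add hdb hsb
    _ = ℓ * ‖q - p‖ / M * a := by rw [ha]; ring
  have hL0 : (0:ℝ) ≤ ‖(d q - s q) - (d p - s p)‖ := norm_nonneg _
  have hsq : ‖(d q - s q) - (d p - s p)‖ ^ 2 ≤ (ℓ * ‖q - p‖ / M * a) ^ 2 :=
    pow_le_pow_left₀ hL0 hR 2
  calc 1 / 2 * ‖(d q - s q) - (d p - s p)‖ ^ 2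
      ≤ 1 / 2 * (ℓ * ‖q - p‖ / M * a) ^ 2 := by linarith
  _ = (ℓ * a / M) ^ 2 * (1 / 2 * ‖q - p‖ ^ 2) := by ring
  _ ≤ (ℓ * a / M) ^ 2 * D q p := mul_le_mul_of_nonneg_left hDge (sq_nonneg _)
end
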